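/- (Pompeiu) Let an equilateral triangle have vertices v_k = c + R·exp(I·(2πk/3 + θ)), k = 0,1,2, with R > 0, and let M be any point in its plane with distances d_k = |M − v_k|. Then d₀, d₁, d₂ satisfy all three triangle inequalities: d₀ ≤ d₁ + d₂, d₁ ≤ d₀ + d₂, and d₂ ≤ d₀ + d₁. -/

import Mathlib

open Complex Real Finset

lemma pompeiu_key (M a b c : ℂ) :
    ‖M - a‖ * ‖b - c‖ ≤
      ‖M - b‖ * ‖c - a‖ +
        ‖M - c‖ * ‖a - b‖ := by
  have h : (M - a) * (b - c) = -((M - b) * (c - a)) + -((M - c) * (a - b)) := by ring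
  calc ‖M - a‖ * ‖b - c‖
      = ‖(M - a) * (b - c)‖ := (norm_mul _ _).symm
    _ ≤ ‖-((M - b) * (c - a))‖ + ‖-((M - c) * (a - b))‖ := by
        rw [h]; exact norm_add_le _ _
    _ = ‖M - b‖ * ‖c - a‖ +
        ‖M - c‖ * ‖a - b‖ := by
        simp [norm_mul]

lemma pompeiu_exp_sub (s t : ℝ) :
    ‖Complex.exp (Complex.I * s) - Complex.exp (Complex.I * t)‖ =
      Real.sqrt (2 - 2 * Real.cos (s - t)) := by
  have h : Complex.exp (Complex.I * s) - Complex.exp (Complex.I * t) =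
      Complex.exp (Complex.I * t) * (Complex.exp (Complex.I * ((s - t : ℝ) : ℂ)) - 1) := by
    rw [mul_sub, ← Complex.exp_add, mul_one]
    push_cast
    ring_nf
  rw [h, norm_mul]
  have h1 : ‖Complex.exp (Complex.I * t)‖ = 1 := by
    rw [Complex.norm_exp]
    simp [Complex.mul_re]
  rw [h1, one_mul]
  have h2 : Complex.exp (Complex.I * ((s - t : ℝ) : ℂ)) - 1 =
      Complex.ofReal (Real.cos (s - t) - 1) + Complex.ofReal (Real.sin (s - t)) * Complex.I := by
    rw [mul_comm, Complex.exp_mul_I]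
    push_cast [Complex.ofReal_cos, Complex.ofReal_sin]
    ring
  rw [h2, Complex.norm_def, Complex.normSq_add_mul_I]
  congr 1
  have := Real.sin_sq_add_cos_sq (s - t)
  nlinarith [this]

lemma pompeiu_cos23 : Real.cos (2 * π / 3) = -(1/2) := by
  have : (2 * π / 3) = π - π / 3 := by ring
  rw [this, Real.cos_pi_sub, Real.cos_pi_div_three]

lemma pompeiu_cos43 : Real.cos (4 * π / 3) = -(1/2) := by
  have : (4 * π / 3) = π / 3 + π := by ring
  rw [this, Real.cos_add_pi, Real.cos_pi_div_three]

theorem pompeiu (c M : ℂ) (R θ : ℝ) (hR : 0 < R)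
    (d : Fin 3 → ℝ)
    (hd : ∀ k : Fin 3,
      d k = ‖M - (c + R * Complex.exp (Complex.I * ((2 * π * (k : ℕ) / 3 + θ : ℝ) : ℂ)))‖) :
    d 0 ≤ d 1 + d 2 ∧ d 1 ≤ d 0 + d 2 ∧ d 2 ≤ d 0 + d 1 := by
  set v : Fin 3 → ℂ := fun k =>
    c + R * Complex.exp (Complex.I * ((2 * π * (k : ℕ) / 3 + θ : ℝ) : ℂ)) with hv
  have hside : ∀ j k : Fin 3, j ≠ k →
      ‖v j - v k‖ = R * Real.sqrt 3 := by
    intro j k hjk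
    have hvd : v j - v k = (R : ℂ) *
        (Complex.exp (Complex.I * ((2 * π * (j : ℕ) / 3 + θ : ℝ) : ℂ)) -
         Complex.exp (Complex.I * ((2 * π * (k : ℕ) / 3 + θ : ℝ) : ℂ))) := by
      simp only [hv]; ring
    rw [hvd, norm_mul, Complex.norm_real, Real.norm_eq_abs, abs_of_pos hR, pompeiu_exp_sub]
    congr 1
    have hcos : Real.cos ((2 * π * (j : ℕ) / 3 + θ) - (2 * π * (k : ℕ) / 3 + θ)) = -(1/2) := by
      fin_cases j <;> fin_cases k <;> simp_all <;>
      first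
        | (rw [show (2 * π * 2 / 3 : ℝ) = 4 * π / 3 by ring, pompeiu_cos43]; norm_num)
        | (rw [show (2 * π / 3 - 2 * π * 2 / 3 : ℝ) = -(2 * π / 3) by ring,
            Real.cos_neg, pompeiu_cos23]; norm_num)
        | (rw [show (2 * π * 2 / 3 - 2 * π / 3 : ℝ) = 2 * π / 3 by ring,
            pompeiu_cos23]; norm_num)
        | (rw [pompeiu_cos23]; norm_num)
    rw [hcos]
    norm_num
  have hs : (0 : ℝ) < R * Real.sqrt 3 := by positivity
  have main : ∀ j k l : Fin 3, j ≠ k → k ≠ l → j ≠ l → d j ≤ d k + d l := by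
    intro j k l hjk hkl hjl
    have := pompeiu_key M (v j) (v k) (v l)
    rw [hd j, hd k, hd l]
    rw [hside k l hkl, hside l j (Ne.symm hjl), hside j k hjk] at this
    have h2 : d j * (R * Real.sqrt 3) ≤ d k * (R * Real.sqrt 3) + d l * (R * Real.sqrt 3) := by
      rw [hd j, hd k, hd l]; exact this
    nlinarith [h2, hs, norm_nonneg (M - v j)]
  exact ⟨main 0 1 2 (by decide) (by decide) (by decide),
         main 1 0 2 (by decide) (by decide) (by decide),
         main 2 0 1 (by decide) (by decide) (by decide)⟩
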